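/- Let ε be a uniformly random permutation of {1,…,N} and let 1 ≤ m ≤ N. Then the random variables B(ε) = Σ_{k=1}^{m} X_k(ε) and I(ε) = Σ_{k=m+1}^{N} X_k(ε) are independent; moreover B(ε) has the same distribution as a sum of independent Bernoulli random variables with success probabilities 1, 1/2, …, 1/m, i.e. the same distribution as the number of cycles of a uniformly random permutation of {1,…,m}. -/

import Mathlib

open MeasureTheory ProbabilityTheory

instance permMeasurableSpace {N : ℕ} : MeasurableSpace (Equiv.Perm (Fin N)) := ⊤

/-- `X σ k = 1` iff `k` is the smallest element of the cycle of `σ` containing `k`. -/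
def X {N : ℕ} (σ : Equiv.Perm (Fin N)) (k : Fin N) : ℕ :=
  if ∀ j : Fin N, σ.SameCycle k j → k ≤ j then 1 else 0

/-- The total number of cycles of a permutation (fixed points included). -/
noncomputable def numCycles {N : ℕ} (σ : Equiv.Perm (Fin N)) : ℕ :=
  Nat.card (Quotient (Equiv.Perm.SameCycle.setoid σ))

namespace Stmt5Aux

open Equiv Equiv.Perm Fin

variable {n : ℕ}

/-- Lift a permutation of `Fin n` to `Fin (n+1)` fixing `last`. -/
def liftE (e : Perm (Fin n)) : Perm (Fin (n + 1)) :=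
  (finSuccEquivLast.trans e.optionCongr).trans finSuccEquivLast.symm

@[simp] lemma liftE_castSucc (e : Perm (Fin n)) (j : Fin n) :
    liftE e (castSucc j) = castSucc (e j) := by
  simp [liftE]

@[simp] lemma liftE_last (e : Perm (Fin n)) : liftE e (last n) = last n := by
  simp [liftE]

/-- Insert `last` into the cycle structure of `e`, with `p = last` meaning a new fixed point. -/
def ins (x : Perm (Fin n) × Fin (n + 1)) : Perm (Fin (n + 1)) :=
  Equiv.swap (last n) x.2 * liftE x.1

@[simp] lemma ins_last (e : Perm (Fin n)) (p : Fin (n + 1)) : ins (e, p) (last n) = p := by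
  simp [ins, Equiv.swap_apply_left]

lemma ins_castSucc (e : Perm (Fin n)) (p : Fin (n + 1)) (j : Fin n) :
    ins (e, p) (castSucc j) = if castSucc (e j) = p then last n else castSucc (e j) := by
  simp only [ins, Equiv.Perm.mul_apply, liftE_castSucc, Equiv.swap_apply_def]
  split_ifs with h1 h2 h2' <;> simp_all [(Fin.castSucc_lt_last (e j)).ne]

lemma ins_injective : Function.Injective (ins (n := n)) := by
  rintro ⟨e, p⟩ ⟨e', p'⟩ h
  have hp : p = p' := by rw [← ins_last e p, ← ins_last e' p', h]
  subst hp
  have hl : liftE e = liftE e' := mul_left_cancel (a := Equiv.swap (last n) p) h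
  have he : e = e' := by
    ext j
    have := congrArg (fun f : Perm (Fin (n+1)) => f (castSucc j)) hl
    simp only [liftE_castSucc] at this
    exact congrArg Fin.val (Fin.castSucc_injective n this)
  simp [he]

lemma card_eq :
    Fintype.card (Perm (Fin n) × Fin (n + 1)) = Fintype.card (Perm (Fin (n + 1))) := by
  simp [Fintype.card_perm, Nat.factorial_succ, mul_comm]

noncomputable def insEquiv : Perm (Fin n) × Fin (n + 1) ≃ Perm (Fin (n + 1)) :=
  Equiv.ofBijective ins
    ((Fintype.bijective_iff_injective_and_card _).2 ⟨ins_injective, card_eq⟩)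

@[simp] lemma insEquiv_apply (x : Perm (Fin n) × Fin (n + 1)) : insEquiv x = ins x := rfl

lemma sameCycle_ins_step (e : Perm (Fin n)) (p : Fin (n + 1)) (j : Fin n) :
    (ins (e, p)).SameCycle (castSucc j) (castSucc (e j)) := by
  by_cases h : castSucc (e j) = p
  · refine ⟨2, ?_⟩
    have h1 : ins (e, p) (castSucc j) = last n := by rw [ins_castSucc, if_pos h]
    have h2 : ins (e, p) (last n) = p := ins_last e p
    have : ((2 : ℤ) : ℤ) = ((2 : ℕ) : ℤ) := by norm_num
    rw [show ((2:ℤ)) = ((2:ℕ) : ℤ) from rfl, zpow_natCast]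
    show (ins (e, p) ^ 2) (castSucc j) = castSucc (e j)
    rw [pow_succ, pow_one, Equiv.Perm.mul_apply, h1, h2, h]
  · exact ⟨1, by rw [zpow_one, ins_castSucc, if_neg h]⟩

lemma sameCycle_ins_pow (e : Perm (Fin n)) (p : Fin (n + 1)) (a : Fin n) :
    ∀ i : ℕ, (ins (e, p)).SameCycle (castSucc a) (castSucc ((e ^ i) a))
  | 0 => by simpa using Equiv.Perm.SameCycle.refl _ _
  | (i + 1) => by
    have : (e ^ (i + 1)) a = e ((e ^ i) a) := by
      rw [pow_succ', Equiv.Perm.mul_apply]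
    rw [this]
    exact (sameCycle_ins_pow e p a i).trans (sameCycle_ins_step e p ((e ^ i) a))

lemma sameCycle_ins_of (e : Perm (Fin n)) (p : Fin (n + 1)) {a b : Fin n}
    (h : e.SameCycle a b) :
    (ins (e, p)).SameCycle (castSucc a) (castSucc b) := by
  obtain ⟨i, -, rfl⟩ := h.exists_pow_eq'
  exact sameCycle_ins_pow e p a i

lemma sameCycle_of_ins (e : Perm (Fin n)) (p : Fin (n + 1)) :
    ∀ N : ℕ, ∀ a b : Fin n, ((ins (e, p)) ^ N) (castSucc a) = castSucc b → e.SameCycle a b := by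
  intro N
  induction N using Nat.strong_induction_on with
  | _ N ih =>
    intro a b hab
    match N, hab with
    | 0, hab =>
      have : a = b := Fin.castSucc_injective n (by simpa using hab)
      exact this ▸ Equiv.Perm.SameCycle.refl _ _
    | (N + 1), hab =>
      have hstep : ((ins (e, p)) ^ (N + 1)) (castSucc a)
          = ((ins (e, p)) ^ N) (ins (e, p) (castSucc a)) := by
        rw [pow_succ, Equiv.Perm.mul_apply]
      by_cases h : castSucc (e a) = p
      · have h1 : ins (e, p) (castSucc a) = last n := by rw [ins_castSucc, if_pos h]
        rw [hstep, h1] at hab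
        match N, hab with
        | 0, hab => exact absurd (by simpa using hab) (Fin.castSucc_lt_last b).ne'
        | (M + 1), hab =>
          have h2 : ((ins (e, p)) ^ (M + 1)) (last n)
              = ((ins (e, p)) ^ M) (castSucc (e a)) := by
            rw [pow_succ, Equiv.Perm.mul_apply, ins_last, ← h]
          rw [h2] at hab
          exact (Equiv.Perm.SameCycle.trans (⟨1, by simp⟩ : e.SameCycle a (e a))) (ih M (by omega) (e a) b hab)
      · have h1 : ins (e, p) (castSucc a) = castSucc (e a) := by rw [ins_castSucc, if_neg h]
        rw [hstep, h1] at hab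
        exact (Equiv.Perm.SameCycle.trans (⟨1, by simp⟩ : e.SameCycle a (e a))) (ih N (by omega) (e a) b hab)

lemma sameCycle_ins_iff (e : Perm (Fin n)) (p : Fin (n + 1)) (a b : Fin n) :
    (ins (e, p)).SameCycle (castSucc a) (castSucc b) ↔ e.SameCycle a b := by
  constructor
  · intro h
    obtain ⟨i, -, hi⟩ := h.exists_pow_eq'
    exact sameCycle_of_ins e p i a b hi
  · exact sameCycle_ins_of e p

lemma X_ins_castSucc (e : Perm (Fin n)) (p : Fin (n + 1)) (k : Fin n) :
    X (ins (e, p)) (castSucc k) = X e k := by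
  unfold X
  refine if_congr ⟨fun h j hj => ?_, fun h j hj => ?_⟩ rfl rfl
  · exact Fin.castSucc_le_castSucc_iff.1 (h (castSucc j) (sameCycle_ins_of e p hj))
  · cases j using Fin.lastCases with
    | last => exact Fin.le_last _
    | cast i =>
      exact Fin.castSucc_le_castSucc_iff.2 (h i ((sameCycle_ins_iff e p k i).1 hj))

lemma X_ins_last (e : Perm (Fin n)) (p : Fin (n + 1)) :
    X (ins (e, p)) (last n) = if p = last n then 1 else 0 := by
  unfold X
  refine if_congr ⟨fun h => ?_, ?_⟩ rfl rfl
  · have h1 := h (ins (e, p) (last n)) ⟨1, by simp⟩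
    rw [ins_last] at h1
    exact le_antisymm (Fin.le_last p) h1
  · rintro rfl j hj
    obtain ⟨i, hi⟩ := hj
    have hfix : ins (e, last n) (last n) = last n := ins_last e _
    rw [Equiv.Perm.zpow_apply_eq_self_of_apply_eq_self hfix i] at hi
    exact hi ▸ le_refl _

end Stmt5Aux

namespace Stmt5Aux

open Equiv Equiv.Perm Fin

variable (m : ℕ)

def K : ℕ → Type
  | 0 => PUnit
  | n + 1 => K n × Fin (m + n + 1)

instance fintypeK : ∀ n, Fintype (K m n)
  | 0 => inferInstanceAs (Fintype PUnit)
  | n + 1 => letI := fintypeK n; inferInstanceAs (Fintype (K m n × Fin (m + n + 1)))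

instance nonemptyK : ∀ n, Nonempty (K m n)
  | 0 => inferInstanceAs (Nonempty PUnit)
  | n + 1 => letI := nonemptyK n; inferInstanceAs (Nonempty (K m n × Fin (m + n + 1)))

instance measK (n : ℕ) : MeasurableSpace (K m n) := ⊤

def cnt : ∀ n, K m n → ℕ
  | 0, _ => 0
  | n + 1, c => cnt n c.1 + (if c.2 = Fin.last (m + n) then 1 else 0)

noncomputable def Phi : ∀ n, Perm (Fin (m + n)) ≃ Perm (Fin m) × K m n
  | 0 => (Equiv.prodPUnit _).symm
  | n + 1 =>
    ((insEquiv.symm.trans ((Phi n).prodCongr (Equiv.refl (Fin (m + n + 1))))).trans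
      (Equiv.prodAssoc _ _ _))

lemma Phi_succ (n : ℕ) (σ : Perm (Fin (m + n + 1))) :
    Phi m (n + 1) σ =
      ((Phi m n (insEquiv.symm σ).1).1,
        ((Phi m n (insEquiv.symm σ).1).2, (insEquiv.symm σ).2)) := by
  rfl

lemma T1 : ∀ n (σ : Perm (Fin (m + n))),
    ∑ k ∈ Finset.univ.filter (fun k : Fin (m + n) => (k : ℕ) < m), X σ k
      = ∑ k : Fin m, X ((Phi m n σ).1) k
  | 0, σ => by
    have : (Finset.univ.filter (fun k : Fin (m + 0) => (k : ℕ) < m)) = Finset.univ :=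
      Finset.filter_true_of_mem (fun k _ => k.isLt)
    rw [this]
    rfl
  | n + 1, σ => by
    obtain ⟨⟨e, p⟩, hep⟩ : ∃ x : Perm (Fin (m + n)) × Fin (m + n + 1), insEquiv x = σ :=
      insEquiv.surjective σ
    have hσ : σ = ins (e, p) := by rw [← hep]; rfl
    have h2 : (insEquiv.symm σ) = (e, p) := (Equiv.symm_apply_eq _).2 hep.symm
    rw [Finset.sum_filter]
    show (∑ a : Fin (m + n + 1), if (a : ℕ) < m then X σ a else 0)
      = ∑ k : Fin m, X ((Phi m (n + 1)) σ).1 k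
    rw [Fin.sum_univ_castSucc]
    have hlast : ¬ ((Fin.last (m + n) : Fin (m + n + 1)) : ℕ) < m := by
      simp [Fin.val_last]
    rw [if_neg hlast, add_zero]
    have : ∀ k : Fin (m + n),
        (if ((castSucc k : Fin (m + n + 1)) : ℕ) < m then X σ (castSucc k) else 0)
          = (if (k : ℕ) < m then X e k else 0) := by
      intro k
      rw [Fin.coe_castSucc, hσ, X_ins_castSucc]
    rw [Finset.sum_congr rfl (fun k _ => this k), ← Finset.sum_filter, T1 n e,
      Phi_succ, ← hep, Equiv.symm_apply_apply]

lemma T2 : ∀ n (σ : Perm (Fin (m + n))),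
    ∑ k ∈ Finset.univ.filter (fun k : Fin (m + n) => m ≤ (k : ℕ)), X σ k
      = cnt m n (Phi m n σ).2
  | 0, σ => by
    have : (Finset.univ.filter (fun k : Fin (m + 0) => m ≤ (k : ℕ))) = ∅ := by
      apply Finset.filter_false_of_mem
      intro k _
      have := k.isLt
      omega
    rw [this]
    rfl
  | n + 1, σ => by
    obtain ⟨⟨e, p⟩, hep⟩ : ∃ x : Perm (Fin (m + n)) × Fin (m + n + 1), insEquiv x = σ :=
      insEquiv.surjective σ
    have hσ : σ = ins (e, p) := by rw [← hep]; rfl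
    have h2 : (insEquiv.symm σ) = (e, p) := (Equiv.symm_apply_eq _).2 hep.symm
    rw [Finset.sum_filter]
    show (∑ a : Fin (m + n + 1), if m ≤ (a : ℕ) then X σ a else 0)
      = cnt m (n + 1) ((Phi m (n + 1)) σ).2
    rw [Fin.sum_univ_castSucc]
    have hlast : m ≤ ((Fin.last (m + n) : Fin (m + n + 1)) : ℕ) := by
      simp [Fin.val_last]
    rw [if_pos hlast]
    have : ∀ k : Fin (m + n),
        (if m ≤ ((castSucc k : Fin (m + n + 1)) : ℕ) then X σ (castSucc k) else 0)
          = (if m ≤ (k : ℕ) then X e k else 0) := by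
      intro k
      rw [Fin.coe_castSucc, hσ, X_ins_castSucc]
    rw [Finset.sum_congr rfl (fun k _ => this k), ← Finset.sum_filter, T2 n e,
      Phi_succ, ← hep, Equiv.symm_apply_apply, insEquiv_apply, X_ins_last]
    rfl

end Stmt5Aux

namespace Stmt5Aux

lemma numCycles_eq_sum {M : ℕ} (π : Equiv.Perm (Fin M)) :
    ∑ k, X π k = numCycles π := by
  classical
  have h1 : ∑ k, X π k
      = (Finset.univ.filter (fun k : Fin M => ∀ j, π.SameCycle k j → k ≤ j)).card := by
    rw [Finset.card_filter]
    refine Finset.sum_congr rfl fun k _ => ?_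
    unfold X
    by_cases h : ∀ j, π.SameCycle k j → k ≤ j <;> simp [h]
  rw [h1, numCycles]
  have hb : Function.Bijective
      (fun k : {x : Fin M // x ∈ Finset.univ.filter (fun k => ∀ j, π.SameCycle k j → k ≤ j)} =>
        Quotient.mk (Equiv.Perm.SameCycle.setoid π) k.1) := by
    constructor
    · rintro ⟨k1, hk1⟩ ⟨k2, hk2⟩ h
      have hsc : π.SameCycle k1 k2 := Quotient.exact h
      rw [Finset.mem_filter] at hk1 hk2
      exact Subtype.ext (le_antisymm (hk1.2 _ hsc) (hk2.2 _ hsc.symm))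
    · intro q
      induction q using Quotient.inductionOn with
      | h a =>
        have ha : a ∈ Finset.univ.filter (fun j => π.SameCycle a j) := by
          simp [Equiv.Perm.SameCycle.refl]
        set k := (Finset.univ.filter (fun j => π.SameCycle a j)).min' ⟨a, ha⟩ with hk
        have hmem : k ∈ Finset.univ.filter (fun j => π.SameCycle a j) :=
          Finset.min'_mem _ ⟨a, ha⟩
        have hak : π.SameCycle a k := by simpa using hmem
        have hcondk : ∀ j, π.SameCycle k j → k ≤ j := by
          intro j hj
          apply Finset.min'_le
          simp only [Finset.mem_filter, Finset.mem_univ, true_and]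
          exact hak.trans hj
        refine ⟨⟨k, ?_⟩, ?_⟩
        · simpa using hcondk
        · exact Quotient.sound hak.symm
  rw [← Nat.card_eq_of_bijective _ hb]
  simp [Nat.card_eq_fintype_card, Fintype.card_coe, Fintype.card_subtype]

end Stmt5Aux

namespace Stmt5Aux

open Equiv

instance discretePerm {M : ℕ} : DiscreteMeasurableSpace (Equiv.Perm (Fin M)) :=
  ⟨fun _ => MeasurableSpace.measurableSet_top⟩

instance discreteK (m n : ℕ) : DiscreteMeasurableSpace (K m n) :=
  ⟨fun _ => MeasurableSpace.measurableSet_top⟩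

lemma map_uniform {α β : Type*} [Fintype α] [Fintype β] [Nonempty α] [Nonempty β] (e : α ≃ β) :
    (PMF.uniformOfFintype α).map e = PMF.uniformOfFintype β := by
  classical
  ext b
  have h0 : ∀ a : α, a ≠ e.symm b →
      (if b = e a then PMF.uniformOfFintype α a else 0) = 0 := by
    intro a ha
    rw [if_neg]
    intro hba
    exact ha (by rw [hba, Equiv.symm_apply_apply])
  rw [PMF.map_apply, tsum_eq_single (e.symm b) h0, if_pos (by simp),
    PMF.uniformOfFintype_apply, PMF.uniformOfFintype_apply, Fintype.card_congr e]

lemma uniform_prod {α β : Type*} [Fintype α] [Fintype β] [Nonempty α] [Nonempty β]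
    [MeasurableSpace α] [MeasurableSpace β]
    [MeasurableSingletonClass α] [MeasurableSingletonClass β] :
    (PMF.uniformOfFintype (α × β)).toMeasure
      = ((PMF.uniformOfFintype α).toMeasure).prod ((PMF.uniformOfFintype β).toMeasure) := by
  refine Measure.ext_iff_singleton.2 fun x => ?_
  obtain ⟨a, b⟩ := x
  have hL : (PMF.uniformOfFintype (α × β)).toMeasure {(a, b)}
      = (Fintype.card (α × β) : ENNReal)⁻¹ := by
    rw [PMF.toMeasure_apply_singleton _ _ (measurableSet_singleton _),
      PMF.uniformOfFintype_apply]
  have hR : ((PMF.uniformOfFintype α).toMeasure).prod ((PMF.uniformOfFintype β).toMeasure)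
        {(a, b)}
      = (Fintype.card α : ENNReal)⁻¹ * (Fintype.card β : ENNReal)⁻¹ := by
    rw [← Set.singleton_prod_singleton, Measure.prod_prod,
      PMF.toMeasure_apply_singleton _ _ (measurableSet_singleton _),
      PMF.toMeasure_apply_singleton _ _ (measurableSet_singleton _),
      PMF.uniformOfFintype_apply, PMF.uniformOfFintype_apply]
  rw [hL, hR, Fintype.card_prod, Nat.cast_mul, ENNReal.mul_inv]
  · right; exact ENNReal.natCast_ne_top _
  · left; exact ENNReal.natCast_ne_top _

end Stmt5Aux



open Stmt5Aux

/-- For `ε` uniform on the permutations of `{1,…,N}` and `1 ≤ m ≤ N`,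
the random variables `B(ε) = Σ_{k=1}^m X_k(ε)` and `I(ε) = Σ_{k=m+1}^N X_k(ε)` are
independent, and `B(ε)` is distributed as the number of cycles of a uniformly random
permutation of `{1,…,m}` (equivalently, as a sum of independent Bernoullis with success
probabilities `1, 1/2, …, 1/m`). -/
theorem stmt_5 (N m : ℕ) (hm : 1 ≤ m) (hmN : m ≤ N) :
    IndepFun
        (fun σ : Equiv.Perm (Fin N) => ∑ k ∈ Finset.univ.filter (fun k : Fin N => (k : ℕ) < m), X σ k)
        (fun σ : Equiv.Perm (Fin N) => ∑ k ∈ Finset.univ.filter (fun k : Fin N => m ≤ (k : ℕ)), X σ k)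
        (PMF.uniformOfFintype (Equiv.Perm (Fin N))).toMeasure ∧
      Measure.map
          (fun σ : Equiv.Perm (Fin N) => ∑ k ∈ Finset.univ.filter (fun k : Fin N => (k : ℕ) < m), X σ k)
          (PMF.uniformOfFintype (Equiv.Perm (Fin N))).toMeasure
        = Measure.map (fun π : Equiv.Perm (Fin m) => numCycles π)
            (PMF.uniformOfFintype (Equiv.Perm (Fin m))).toMeasure := by
  obtain ⟨n, rfl⟩ : ∃ n, N = m + n := ⟨N - m, (Nat.add_sub_cancel' hmN).symm⟩
  set μ := (PMF.uniformOfFintype (Equiv.Perm (Fin (m + n)))).toMeasure with hμ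
  set μ1 := (PMF.uniformOfFintype (Equiv.Perm (Fin m))).toMeasure with hμ1
  set μ2 := (PMF.uniformOfFintype (K m n)).toMeasure with hμ2
  set f := fun σ : Equiv.Perm (Fin (m + n)) =>
    ∑ k ∈ Finset.univ.filter (fun k : Fin (m + n) => (k : ℕ) < m), X σ k with hfdef
  set g := fun σ : Equiv.Perm (Fin (m + n)) =>
    ∑ k ∈ Finset.univ.filter (fun k : Fin (m + n) => m ≤ (k : ℕ)), X σ k with hgdef
  set B' := fun π : Equiv.Perm (Fin m) => ∑ k, X π k with hB'def
  have hΦmeas : Measurable (Phi m n) := Measurable.of_discrete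
  have hB : Measurable B' := Measurable.of_discrete
  have hc : Measurable (cnt m n) := Measurable.of_discrete
  have hmap : μ.map (Phi m n) = μ1.prod μ2 := by
    rw [hμ, PMF.toMeasure_map _ _ hΦmeas, map_uniform (Phi m n), uniform_prod]
  have hfmap : μ.map f = μ1.map B' := by
    have h1 : f = (B' ∘ Prod.fst) ∘ (Phi m n) := funext (fun σ => T1 m n σ)
    rw [h1, ← Measure.map_map (hB.comp measurable_fst) hΦmeas, hmap,
      ← Measure.map_map hB measurable_fst, Measure.map_fst_prod]
    simp
  have hgmap : μ.map g = μ2.map (cnt m n) := by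
    have h1 : g = (cnt m n ∘ Prod.snd) ∘ (Phi m n) := funext (fun σ => T2 m n σ)
    rw [h1, ← Measure.map_map (hc.comp measurable_snd) hΦmeas, hmap,
      ← Measure.map_map hc measurable_snd, Measure.map_snd_prod]
    simp
  have hprod : μ.map (fun σ => (f σ, g σ)) = (μ1.map B').prod (μ2.map (cnt m n)) := by
    have h1 : (fun σ => (f σ, g σ)) = (Prod.map B' (cnt m n)) ∘ (Phi m n) := by
      funext σ
      exact Prod.ext (T1 m n σ) (T2 m n σ)
    rw [h1, ← Measure.map_map (hB.prodMap hc) hΦmeas, hmap,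
      ← Measure.map_prod_map _ _ hB hc]
  constructor
  · rw [indepFun_iff_map_prod_eq_prod_map_map
      (Measurable.of_discrete (f := f)).aemeasurable
      (Measurable.of_discrete (f := g)).aemeasurable]
    rw [hprod, hfmap, hgmap]
  · rw [hfmap]
    congr 1
    funext π
    exact numCycles_eq_sum π
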